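/- Let X, Y be topological spaces, Φ : X → 2^Y a multifunction, u : Gr(Φ) → ℝ∪{±∞}, and x ∈ Dom(Φ). If u is upper semicontinuous at each point of {x} × Φ(x) (as a function on Gr(Φ)) and Φ is lower semicontinuous at x, then the value function u*(z) = inf_{y ∈ Φ(z)} u(z,y) is upper semicontinuous at x. -/
import Mathlib


open Filter Topology Set

/-- If `u` is upper semicontinuous at each point of `{x} × Φ x` (with respect to the graph of `Φ`)
and the multifunction `Φ` is lower semicontinuous at `x`, then the value function
`z ↦ ⨅ y ∈ Φ z, u z y` is upper semicontinuous at `x`. -/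
theorem stmt1 {X Y : Type*} [TopologicalSpace X] [TopologicalSpace Y]
    (Φ : X → Set Y) (u : X → Y → EReal) (x : X) (hx : (Φ x).Nonempty)
    (husc : ∀ y ∈ Φ x, UpperSemicontinuousWithinAt (fun p : X × Y => u p.1 p.2)
      {p : X × Y | p.2 ∈ Φ p.1} (x, y))
    (hlsc : ∀ V : Set Y, IsOpen V → (Φ x ∩ V).Nonempty →
      ∀ᶠ x' in 𝓝 x, (Φ x' ∩ V).Nonempty) :
    UpperSemicontinuousAt (fun z => ⨅ y ∈ Φ z, u z y) x := by
  intro c hc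
  obtain ⟨y, hy, hyc⟩ : ∃ y ∈ Φ x, u x y < c := by
    by_contra! h
    exact hc.not_ge (le_iInf₂ h)
  have hev := husc y hy c hyc
  rw [eventually_iff, mem_nhdsWithin] at hev
  obtain ⟨W, hWopen, hWmem, hWsub⟩ := hev
  obtain ⟨U, V, hUopen, hVopen, hxU, hyV, hUV⟩ := isOpen_prod_iff.1 hWopen x y hWmem
  filter_upwards [hlsc V hVopen ⟨y, hy, hyV⟩, hUopen.mem_nhds hxU] with x' hx' hx'U
  obtain ⟨y', hy'Φ, hy'V⟩ := hx'
  have : u x' y' < c := hWsub (show (x', y') ∈ W ∩ {p : X × Y | p.2 ∈ Φ p.1} from ⟨hUV ⟨hx'U, hy'V⟩, hy'Φ⟩)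
  exact lt_of_le_of_lt (iInf₂_le y' hy'Φ) this
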